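/- Let α > 1, m > 0, c₁ > 0, R > 0, a ≥ 0, b ≥ 0, and let y > 0 and z ∈ ℝ satisfy y − αz > 0. Then for every ε ∈ (0,1): (y − z)² − (m c₁/R)·√y·(y − αz) − m·a·y − m·b·√y ≥ (y − αz)²/α² − (m c₁/R)²·α²·(y − αz)/(8(α−1)) − (α² m² a²)/(4(1−ε)(α−1)²) − (3/4)·(m⁴ b⁴ α²/(4ε(α−1)²))^{1/3}. -/

import Mathlib

lemma young_aux (K w s : ℝ) (hK : 0 < K) (hw : 0 ≤ w) (hs : 0 ≤ s) :
    w * s ≤ K * s ^ 4 + (3 / 4) * (w ^ 4 / (4 * K)) ^ ((1 : ℝ) / 3) := by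
  set t := (w / (4 * K)) ^ ((1 : ℝ) / 3) with ht
  have ht0 : 0 ≤ t := Real.rpow_nonneg (by positivity) _
  have ht3 : t ^ 3 = w / (4 * K) := by
    rw [ht, ← Real.rpow_natCast ((w / (4 * K)) ^ ((1 : ℝ) / 3)) 3,
      ← Real.rpow_mul (by positivity)]
    norm_num
  have hw' : w = 4 * K * t ^ 3 := by rw [ht3]; field_simp
  have harg : w ^ 4 / (4 * K) = (4 * K * t ^ 4) ^ 3 := by
    rw [hw']; field_simp
  have hcube : (w ^ 4 / (4 * K)) ^ ((1 : ℝ) / 3) = 4 * K * t ^ 4 := by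
    rw [harg, ← Real.rpow_natCast (4 * K * t ^ 4) 3, ← Real.rpow_mul (by positivity)]
    norm_num
  rw [hcube, hw']
  have h1 : 0 ≤ (s - t) ^ 2 * (s ^ 2 + 2 * s * t + 3 * t ^ 2) :=
    mul_nonneg (sq_nonneg _) (by nlinarith [mul_nonneg hs ht0, sq_nonneg s, sq_nonneg t])
  nlinarith [mul_nonneg hK.le h1]

theorem stmt_1 (α m c₁ R a b y z ε : ℝ) (hα : 1 < α) (hm : 0 < m) (hc : 0 < c₁)
    (hR : 0 < R) (ha : 0 ≤ a) (hb : 0 ≤ b) (hy : 0 < y) (hyz : 0 < y - α * z)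
    (hε : ε ∈ Set.Ioo (0 : ℝ) 1) :
    (y - z) ^ 2 - (m * c₁ / R) * Real.sqrt y * (y - α * z) - m * a * y - m * b * Real.sqrt y ≥
      (y - α * z) ^ 2 / α ^ 2 - (m * c₁ / R) ^ 2 * α ^ 2 * (y - α * z) / (8 * (α - 1))
        - (α ^ 2 * m ^ 2 * a ^ 2) / (4 * (1 - ε) * (α - 1) ^ 2)
        - (3 / 4) * (m ^ 4 * b ^ 4 * α ^ 2 / (4 * ε * (α - 1) ^ 2)) ^ ((1 : ℝ) / 3) := by
  obtain ⟨hε0, hε1⟩ := hε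
  have hα0 : (0 : ℝ) < α := by linarith
  have hα1 : (0 : ℝ) < α - 1 := by linarith
  have h1ε : (0 : ℝ) < 1 - ε := by linarith
  set s := Real.sqrt y with hs
  have hs0 : 0 ≤ s := Real.sqrt_nonneg y
  have hs2 : s ^ 2 = y := Real.sq_sqrt hy.le
  set u := y - α * z with hu
  set q := m * c₁ / R with hq
  have hq0 : 0 < q := by positivity
  -- expansion of (y - z)^2
  have expand : (y - z) ^ 2 =
      u ^ 2 / α ^ 2 + 2 * (α - 1) / α ^ 2 * y * u + (α - 1) ^ 2 / α ^ 2 * y ^ 2 := by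
    have key : y - z = u / α + (α - 1) / α * y := by
      rw [hu]; field_simp; ring
    rw [key]; field_simp; ring
  -- Term A
  set e := 2 * (α - 1) / α ^ 2 with he
  have he0 : 0 < e := by positivity
  have hA : q * s * u ≤ e * y * u + q ^ 2 * α ^ 2 * u / (8 * (α - 1)) := by
    have hqs : q * s ≤ e * s ^ 2 + q ^ 2 / (4 * e) := by
      have hid : e * s ^ 2 + q ^ 2 / (4 * e) - q * s = (2 * e * s - q) ^ 2 / (4 * e) := by
        field_simp; ring
      have h0 : 0 ≤ (2 * e * s - q) ^ 2 / (4 * e) := by positivity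
      linarith [hid, h0]
    have := mul_le_mul_of_nonneg_right hqs hyz.le
    have hrw : (e * s ^ 2 + q ^ 2 / (4 * e)) * u
        = e * y * u + q ^ 2 * α ^ 2 * u / (8 * (α - 1)) := by
      rw [hs2, he]; field_simp; ring
    linarith [hrw ▸ this]
  -- Term B
  have hB : m * a * y ≤ (1 - ε) * ((α - 1) ^ 2 / α ^ 2) * y ^ 2
      + (α ^ 2 * m ^ 2 * a ^ 2) / (4 * (1 - ε) * (α - 1) ^ 2) := by
    set K := (1 - ε) * ((α - 1) ^ 2 / α ^ 2) with hK
    have hK0 : 0 < K := by positivity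
    have hid : K * y ^ 2 + (m * a) ^ 2 / (4 * K) - m * a * y
        = (2 * K * y - m * a) ^ 2 / (4 * K) := by field_simp; ring
    have hrw : (m * a) ^ 2 / (4 * K)
        = (α ^ 2 * m ^ 2 * a ^ 2) / (4 * (1 - ε) * (α - 1) ^ 2) := by
      rw [hK]; field_simp
    have h0 : 0 ≤ (2 * K * y - m * a) ^ 2 / (4 * K) := by positivity
    linarith [hid, h0, hrw.ge, hrw.le]
  -- Term C
  have hC : m * b * s ≤ ε * ((α - 1) ^ 2 / α ^ 2) * y ^ 2
      + (3 / 4) * (m ^ 4 * b ^ 4 * α ^ 2 / (4 * ε * (α - 1) ^ 2)) ^ ((1 : ℝ) / 3) := by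
    set K := ε * ((α - 1) ^ 2 / α ^ 2) with hK
    have hK0 : 0 < K := by positivity
    have := young_aux K (m * b) s hK0 (by positivity) hs0
    have hrw : ((m * b) ^ 4 / (4 * K)) = m ^ 4 * b ^ 4 * α ^ 2 / (4 * ε * (α - 1) ^ 2) := by
      rw [hK]; field_simp
    have hs4 : s ^ 4 = y ^ 2 := by rw [← hs2]; ring
    rw [hrw, hs4] at this
    linarith [this]
  -- combine
  have hsplit : (α - 1) ^ 2 / α ^ 2 * y ^ 2
      = (1 - ε) * ((α - 1) ^ 2 / α ^ 2) * y ^ 2 + ε * ((α - 1) ^ 2 / α ^ 2) * y ^ 2 := by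
    ring
  rw [expand]
  have h2 : 2 * (α - 1) / α ^ 2 * y * u = e * y * u := by rw [he]
  linarith [hA, hB, hC]
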